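/- arXiv:2508.06770 — 2 statements merged into one kernel-verified Lean document; each statement's English description precedes it below -/
import Mathlib

section
/- Let λ be a Young diagram with n boxes and diagonal length δ(λ), let σ ∈ S_n, and let α = (α_1, ..., α_N) be any sequence listing the cycle lengths of σ (fixed points included, in any order), so that Σ α_i = n and N = cyc(σ). Then the number of ribbon tableaux of λ of weight α satisfies |RT(λ, α)| ≤ ∏_{i=1}^N (2δ(λ)·α_i), and in particular |RT(λ, α)| ≤ 2^n · δ(λ)^{cyc(σ)}. -/
open scoped BigOperators

namespace ThickHookPaper

/-- The diagonal length `δ(λ)` of a Young diagram: the number of diagonal boxes `(i,i)` in `λ`. -/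
def diagLen (l : YoungDiagram) : ℕ := (l.cells.filter (fun u => u.1 = u.2)).card

/-- The maximal hook length `s(λ) = λ₁ + λ₁' - 1` of a Young diagram. -/
def maxHook (l : YoungDiagram) : ℕ := l.rowLen 0 + l.colLen 0 - 1

/-- The hook length of the box `u = (i, j)` in `λ`. -/
def hook (l : YoungDiagram) (u : ℕ × ℕ) : ℕ :=
  (l.rowLen u.1 - u.2) + (l.colLen u.2 - u.1) - 1

/-- The number of standard tableaux of the skew shape `λ \ μ`, defined as the number of
saturated chains of Young diagrams from `μ` to `λ` (each step adding exactly one box). -/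
noncomputable def skewSYT (μ l : YoungDiagram) : ℕ :=
  Nat.card {f : Fin (l.card - μ.card + 1) → YoungDiagram //
    f 0 = μ ∧ f (Fin.last _) = l ∧
    ∀ i : Fin (l.card - μ.card),
      f i.castSucc ≤ f i.succ ∧ (f i.succ).card = (f i.castSucc).card + 1}

/-- The number of standard Young tableaux of shape `λ`, i.e. the dimension `d_λ`. -/
noncomputable def dim (l : YoungDiagram) : ℕ := skewSYT ⊥ l

/-! ### Ribbons and the Murnaghan--Nakayama character -/

/-- Two boxes are adjacent if they share an edge. -/
def Adj (u v : ℕ × ℕ) : Prop :=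
  (u.1 = v.1 ∧ (u.2 + 1 = v.2 ∨ v.2 + 1 = u.2)) ∨
    (u.2 = v.2 ∧ (u.1 + 1 = v.1 ∨ v.1 + 1 = u.1))

/-- A finite set of boxes is connected if any two of its boxes are linked by a path of
adjacent boxes inside the set. -/
def ConnectedCells (c : Finset (ℕ × ℕ)) : Prop :=
  ∀ u ∈ c, ∀ v ∈ c, Relation.ReflTransGen (fun x y => x ∈ c ∧ y ∈ c ∧ Adj x y) u v

/-- A set of boxes contains no `2 × 2` square. -/
def No2x2 (c : Finset (ℕ × ℕ)) : Prop :=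
  ∀ i j : ℕ, ¬ ((i, j) ∈ c ∧ (i + 1, j) ∈ c ∧ (i, j + 1) ∈ c ∧ (i + 1, j + 1) ∈ c)

/-- `IsRibbon μ l` : the skew diagram `l \ μ` is a ribbon (nonempty, connected, no 2×2 square). -/
def IsRibbon (μ l : YoungDiagram) : Prop :=
  μ ≤ l ∧ (l.cells \ μ.cells).Nonempty ∧ ConnectedCells (l.cells \ μ.cells) ∧
    No2x2 (l.cells \ μ.cells)

/-- The height of a set of boxes: the difference between the largest and smallest
row indices occurring in it. -/
noncomputable def cellsHeight (c : Finset (ℕ × ℕ)) : ℕ :=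
  c.sup Prod.fst - sInf (Prod.fst '' (c : Set (ℕ × ℕ)))

/-- `IsRibbonTableau l α f` : `f` is a ribbon tableau of shape `l` and weight `α`, i.e. a
chain `⊥ = f 0 ⊆ f 1 ⊆ ... ⊆ f N = l` where each successive skew diagram is a ribbon
with `α i` boxes. -/
def IsRibbonTableau (l : YoungDiagram) (α : List ℕ) (f : Fin (α.length + 1) → YoungDiagram) :
    Prop :=
  f 0 = ⊥ ∧ f (Fin.last _) = l ∧
  ∀ i : Fin α.length,
    IsRibbon (f i.castSucc) (f i.succ) ∧
      ((f i.succ).cells \ (f i.castSucc).cells).card = α.get i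

/-- The total height of a ribbon tableau: the sum of the heights of its ribbons. -/
noncomputable def tabHeight (N : ℕ) (f : Fin (N + 1) → YoungDiagram) : ℕ :=
  ∑ i : Fin N, cellsHeight ((f i.succ).cells \ (f i.castSucc).cells)

/-- The Murnaghan--Nakayama alternating sum over ribbon tableaux of shape `l` and weight `α`. -/
noncomputable def charMN (l : YoungDiagram) (α : List ℕ) : ℤ :=
  ∑ᶠ f ∈ {f : Fin (α.length + 1) → YoungDiagram | IsRibbonTableau l α f},
    (-1 : ℤ) ^ tabHeight α.length f

/-- The cycle type of a permutation including fixed points (as parts equal to `1`). -/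
def fullCycleType {n : ℕ} (σ : Equiv.Perm (Fin n)) : Multiset ℕ :=
  σ.cycleType + Multiset.replicate (n - σ.support.card) 1

/-- The character `ch^λ(σ)` of the irreducible representation of `S_n` indexed by `λ ⊢ n`,
defined via the Murnaghan--Nakayama rule. -/
noncomputable def charPerm (l : YoungDiagram) {n : ℕ} (σ : Equiv.Perm (Fin n)) : ℤ :=
  charMN l (fullCycleType σ).toList

/-- The total number of cycles of `σ`, fixed points counted as 1-cycles. -/
def cyc {n : ℕ} (σ : Equiv.Perm (Fin n)) : ℕ := Multiset.card (fullCycleType σ)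

/-- `|σ|`: the minimal number of transpositions whose product is `σ`, which equals
`n` minus the number of cycles of `σ` (fixed points included). -/
def transLen {n : ℕ} (σ : Equiv.Perm (Fin n)) : ℕ := n - cyc σ

/-! ### Excited diagrams -/

/-- The upper-right square of a box. -/
def URS (u : ℕ × ℕ) : Finset (ℕ × ℕ) :=
  {u, (u.1 + 1, u.2), (u.1, u.2 + 1), (u.1 + 1, u.2 + 1)}

/-- One simple excitation step: an excitable box of `E` is moved diagonally up-right. -/
def ExciteStep (l : YoungDiagram) (E E' : Finset (ℕ × ℕ)) : Prop :=
  ∃ u ∈ E, URS u ⊆ l.cells ∧ E ∩ URS u = {u} ∧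
    E' = insert (u.1 + 1, u.2 + 1) (E.erase u)

/-- The set `𝓔(λ, μ)` of excited diagrams of `μ` in `λ`. -/
def Excited (l μ : YoungDiagram) : Set (Finset (ℕ × ℕ)) :=
  {E | Relation.ReflTransGen (ExciteStep l) μ.cells E}

/-- The excited sum `S(λ, μ) = Σ_{E ∈ 𝓔(λ,μ)} Π_{u ∈ E} H(λ, u)`. -/
noncomputable def excitedSum (l μ : YoungDiagram) : ℕ :=
  ∑ᶠ E ∈ Excited l μ, ∏ u ∈ E, hook l u

/-! ### Rectangles, rows -/

/-- The rectangular Young diagram `[a^b]` with `b` rows of length `a`. -/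
def rect (a b : ℕ) : YoungDiagram :=
  ⟨Finset.range b ×ˢ Finset.range a, by
    rintro ⟨i, j⟩ ⟨i', j'⟩ ⟨h1, h2⟩ hu
    simp only [Finset.coe_product, Set.mem_prod, Finset.mem_coe, Finset.mem_range] at *
    exact ⟨lt_of_le_of_lt h1 hu.1, lt_of_le_of_lt h2 hu.2⟩⟩

/-- The one-row Young diagram `[ℓ]`. -/
def rowDiagram (ℓ : ℕ) : YoungDiagram := rect ℓ 1

/-! ### Thick hook decompositions -/

/-- The boxes of `λ` whose diagonal index `min i j` lies in `[lo, hi)`: this is the thick hook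
`λ^{(lo+1) → hi}` in the (1-indexed) notation of the paper. -/
def thickHookCells (l : YoungDiagram) (lo hi : ℕ) : Finset (ℕ × ℕ) :=
  l.cells.filter (fun u => lo ≤ min u.1 u.2 ∧ min u.1 u.2 < hi)

/-- An `(a, b)` thick hook decomposition of `λ`: diagonal indices
`0 = i_0 < i_1 < ... < i_p = δ(λ)` such that each thick hook
`T_j = λ^{(i_{j-1}+1) → i_j}` has between `a` and `b` boxes. -/
structure ThickHookDecomp (l : YoungDiagram) (a b : ℝ) where
  p : ℕ
  p_pos : 0 < p
  idx : ℕ → ℕ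
  idx_zero : idx 0 = 0
  idx_last : idx p = diagLen l
  idx_strictMono : ∀ j < p, idx j < idx (j + 1)
  size_lb : ∀ j < p, a ≤ ((thickHookCells l (idx j) (idx (j + 1))).card : ℝ)
  size_ub : ∀ j < p, ((thickHookCells l (idx j) (idx (j + 1))).card : ℝ) ≤ b

/-- The corners of a Young diagram: boxes `u ∈ λ` such that neither the box to the right
nor the box above (in the French convention: the next box in the row and in the column)
belongs to `λ`. -/
def corners (l : YoungDiagram) : Finset (ℕ × ℕ) :=
  l.cells.filter (fun u => (u.1, u.2 + 1) ∉ l ∧ (u.1 + 1, u.2) ∉ l)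


/-! ### Auxiliary lemmas for counting ribbon tableaux -/

/-- The content of a box, as an integer. -/
def contentZ (u : ℕ × ℕ) : ℤ := (u.2 : ℤ) - (u.1 : ℤ)

lemma mem_diff_of_between {μ ν : YoungDiagram} {a b a' b' x y : ℕ}
    (h1 : (a, b) ∈ ν.cells \ μ.cells) (h2 : (a', b') ∈ ν.cells \ μ.cells)
    (hax : a ≤ x) (hxa : x ≤ a') (hby : b ≤ y) (hyb : y ≤ b') :
    (x, y) ∈ ν.cells \ μ.cells := by
  simp only [Finset.mem_sdiff, YoungDiagram.mem_cells] at h1 h2 ⊢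
  refine ⟨ν.up_left_mem hxa hyb h2.1, fun hm => h1.2 (μ.up_left_mem hax hby hm)⟩

/-- Contents of the boxes of a skew shape with no 2×2 square are pairwise distinct. -/
lemma content_inj {μ ν : YoungDiagram}
    (h2 : No2x2 (ν.cells \ μ.cells)) :
    ∀ w ∈ ν.cells \ μ.cells, ∀ w' ∈ ν.cells \ μ.cells, contentZ w = contentZ w' → w = w' := by
  rintro ⟨a, b⟩ hw ⟨c, d⟩ hw' h
  simp only [contentZ] at h
  rcases lt_trichotomy a c with hac | hac | hac
  · have hbd : b < d := by omega
    exact absurd ⟨hw, mem_diff_of_between hw hw' (by omega) (by omega) le_rfl (by omega),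
      mem_diff_of_between hw hw' le_rfl (by omega) (by omega) (by omega),
      mem_diff_of_between hw hw' (by omega) (by omega) (by omega) (by omega)⟩ (h2 a b)
  · have : b = d := by omega
    simp [hac, this]
  · have hbd : d < b := by omega
    exact absurd ⟨hw', mem_diff_of_between hw' hw (by omega) (by omega) le_rfl (by omega),
      mem_diff_of_between hw' hw le_rfl (by omega) (by omega) (by omega),
      mem_diff_of_between hw' hw (by omega) (by omega) (by omega) (by omega)⟩ (h2 c d)

lemma succ_diag_not_mem {μ ν : YoungDiagram}
    (h2 : No2x2 (ν.cells \ μ.cells)) {w : ℕ × ℕ} (hw : w ∈ ν.cells \ μ.cells) :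
    (w.1 + 1, w.2 + 1) ∉ ν := by
  intro hmem
  by_cases hmu : (w.1 + 1, w.2 + 1) ∈ μ
  · rw [Finset.mem_sdiff, YoungDiagram.mem_cells, YoungDiagram.mem_cells] at hw
    exact hw.2 (μ.up_left_mem (Nat.le_succ _) (Nat.le_succ _) hmu)
  · have hd : (w.1 + 1, w.2 + 1) ∈ ν.cells \ μ.cells := by
      simp [Finset.mem_sdiff, YoungDiagram.mem_cells, hmem, hmu]
    have := content_inj h2 w hw (w.1 + 1, w.2 + 1) hd (by simp [contentZ])
    have := congrArg Prod.fst this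
    simp at this

/-- Two boxes of (possibly different) ribbons of the same outer shape `ν` with
equal contents coincide. -/
lemma eq_of_content_eq {ν μ μ' : YoungDiagram}
    (h2 : No2x2 (ν.cells \ μ.cells)) (h2' : No2x2 (ν.cells \ μ'.cells))
    {w w' : ℕ × ℕ} (hw : w ∈ ν.cells \ μ.cells) (hw' : w' ∈ ν.cells \ μ'.cells)
    (hc : contentZ w = contentZ w') : w = w' := by
  obtain ⟨a, b⟩ := w
  obtain ⟨c, d⟩ := w'
  simp only [contentZ] at hc
  rcases lt_trichotomy a c with hac | hac | hac
  · exfalso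
    refine succ_diag_not_mem h2 hw ?_
    have hcd : (c, d) ∈ ν := by
      rw [Finset.mem_sdiff, YoungDiagram.mem_cells] at hw'; exact hw'.1
    exact ν.up_left_mem (by omega) (by omega) hcd
  · have : b = d := by omega
    simp [hac, this]
  · exfalso
    refine succ_diag_not_mem h2' hw' ?_
    have hab : (a, b) ∈ ν := by
      rw [Finset.mem_sdiff, YoungDiagram.mem_cells] at hw; exact hw.1
    exact ν.up_left_mem (by omega) (by omega) hab

/-- Every nonempty skew shape contains a corner of the outer shape. -/
lemma exists_corner {μ ν : YoungDiagram}
    (hne : (ν.cells \ μ.cells).Nonempty) :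
    ∃ u, u ∈ ν.cells \ μ.cells ∧ u ∈ ν ∧ (u.1, u.2 + 1) ∉ ν ∧ (u.1 + 1, u.2) ∉ ν := by
  classical
  set R := ν.cells \ μ.cells with hR
  have hRν : ∀ w ∈ R, w ∈ ν := by
    intro w hw; rw [hR, Finset.mem_sdiff, YoungDiagram.mem_cells] at hw; exact hw.1
  have hRμ : ∀ w ∈ R, w ∉ μ := by
    intro w hw; rw [hR, Finset.mem_sdiff, YoungDiagram.mem_cells] at hw; exact hw.2
  have h1 : (R.image Prod.fst).Nonempty := hne.image _
  set i0 := (R.image Prod.fst).max' h1 with hi0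
  have hi0mem : i0 ∈ R.image Prod.fst := (R.image Prod.fst).max'_mem h1
  obtain ⟨w0, hw0, hw0i⟩ := Finset.mem_image.mp hi0mem
  set T := R.filter (fun u => u.1 = i0) with hT
  have hTne : T.Nonempty := ⟨w0, Finset.mem_filter.mpr ⟨hw0, hw0i⟩⟩
  have h2 : (T.image Prod.snd).Nonempty := hTne.image _
  set j0 := (T.image Prod.snd).max' h2 with hj0
  have hj0mem : j0 ∈ T.image Prod.snd := (T.image Prod.snd).max'_mem h2
  obtain ⟨w1, hw1, hw1j⟩ := Finset.mem_image.mp hj0mem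
  have hw1T := Finset.mem_filter.mp hw1
  have huT : (i0, j0) ∈ T := by
    have : w1 = (i0, j0) := by
      obtain ⟨x, y⟩ := w1
      simp only at hw1j
      have := hw1T.2
      simp only at this
      simp [this, hw1j]
    rwa [this] at hw1
  have huR : (i0, j0) ∈ R := (Finset.mem_filter.mp huT).1
  refine ⟨(i0, j0), huR, hRν _ huR, ?_, ?_⟩
  · intro hmem
    by_cases hmu : (i0, j0 + 1) ∈ μ
    · exact hRμ _ huR (μ.up_left_mem le_rfl (Nat.le_succ _) hmu)
    · have hd : (i0, j0 + 1) ∈ R := by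
        rw [hR, Finset.mem_sdiff, YoungDiagram.mem_cells]; exact ⟨hmem, hmu⟩
      have : (i0, j0 + 1) ∈ T := Finset.mem_filter.mpr ⟨hd, rfl⟩
      have := (T.image Prod.snd).le_max' (j0 + 1) (Finset.mem_image.mpr ⟨_, this, rfl⟩)
      omega
  · intro hmem
    by_cases hmu : (i0 + 1, j0) ∈ μ
    · exact hRμ _ huR (μ.up_left_mem (Nat.le_succ _) le_rfl hmu)
    · have hd : (i0 + 1, j0) ∈ R := by
        rw [hR, Finset.mem_sdiff, YoungDiagram.mem_cells]; exact ⟨hmem, hmu⟩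
      have := (R.image Prod.fst).le_max' (i0 + 1) (Finset.mem_image.mpr ⟨_, hd, rfl⟩)
      omega

/-- A corner of `ν` is determined by its diagonal index and its side. -/
lemma corner_inj {ν : YoungDiagram} {u v : ℕ × ℕ}
    (hu : u ∈ ν ∧ (u.1, u.2 + 1) ∉ ν ∧ (u.1 + 1, u.2) ∉ ν)
    (hv : v ∈ ν ∧ (v.1, v.2 + 1) ∉ ν ∧ (v.1 + 1, v.2) ∉ ν)
    (hmin : min u.1 u.2 = min v.1 v.2)
    (hside : (decide (u.1 ≤ u.2)) = (decide (v.1 ≤ v.2))) : u = v := by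
  obtain ⟨a, b⟩ := u
  obtain ⟨c, d⟩ := v
  simp only at hu hv hmin hside ⊢
  by_cases hab : a ≤ b
  · have hcd : c ≤ d := by
      by_contra h
      simp [hab, h] at hside
    have hac : a = c := by omega
    subst hac
    rcases lt_trichotomy b d with h | h | h
    · exact absurd (ν.up_left_mem le_rfl (by omega) hv.1) hu.2.1
    · simp [h]
    · exact absurd (ν.up_left_mem le_rfl (by omega) hu.1) hv.2.1
  · have hcd : ¬ c ≤ d := by
      by_contra h
      simp [hab, h] at hside
    have hbd : b = d := by omega
    subst hbd
    rcases lt_trichotomy a c with h | h | h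
    · exact absurd (ν.up_left_mem (by omega) le_rfl hv.1) hu.2.2
    · simp [h]
    · exact absurd (ν.up_left_mem (by omega) le_rfl hu.1) hv.2.2

lemma min_lt_diagLen {l : YoungDiagram} {u : ℕ × ℕ} (hu : u ∈ l) :
    min u.1 u.2 < diagLen l := by
  set m := min u.1 u.2 with hm
  have hsub : ∀ t ∈ Finset.range (m + 1), (t, t) ∈ l.cells.filter (fun u => u.1 = u.2) := by
    intro t ht
    rw [Finset.mem_range] at ht
    refine Finset.mem_filter.mpr ⟨?_, rfl⟩
    rw [YoungDiagram.mem_cells]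
    exact l.up_left_mem (by omega) (by omega) hu
  have : (Finset.range (m + 1)).card ≤ (l.cells.filter (fun u => u.1 = u.2)).card := by
    apply Finset.card_le_card_of_injOn (fun t => (t, t)) hsub
    intro x _ y _ h
    exact congrArg Prod.fst h
  simpa [diagLen] using this

lemma adj_content {u v : ℕ × ℕ} (h : Adj u v) :
    contentZ v = contentZ u + 1 ∨ contentZ u = contentZ v + 1 := by
  rcases h with ⟨h1, h2 | h2⟩ | ⟨h1, h2 | h2⟩ <;> simp only [contentZ] <;> omega

/-- The set of contents of a connected set of boxes is an interval. -/
lemma content_interval {c : Finset (ℕ × ℕ)} (hc : ConnectedCells c) :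
    ∀ u ∈ c, ∀ v ∈ c, ∀ t : ℤ, contentZ u ≤ t → t ≤ contentZ v → ∃ w ∈ c, contentZ w = t := by
  intro u hu v hv
  have h := hc u hu v hv
  induction h with
  | refl =>
    intro t h1 h2
    exact ⟨u, hu, le_antisymm h1 h2⟩
  | tail _ hstep ih =>
    rename_i b v' _
    intro t h1 h2
    obtain ⟨hb, hv', hadj⟩ := hstep
    have hd := adj_content hadj
    by_cases hle : t ≤ contentZ b
    · exact ih hb t h1 hle
    · have : t = contentZ v' := by omega
      exact ⟨v', hv', this.symm⟩
/-- An interval finset of integers is characterized by one member, the count of elements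
below it, and the cardinality. -/
lemma interval_char {S : Finset ℤ}
    (hS : ∀ a ∈ S, ∀ b ∈ S, ∀ t : ℤ, a ≤ t → t ≤ b → t ∈ S) {c : ℤ} (hc : c ∈ S) :
    S = Finset.Icc (c - (S.filter (fun t => t < c)).card)
      (c - (S.filter (fun t => t < c)).card + S.card - 1) := by
  classical
  have hne : S.Nonempty := ⟨c, hc⟩
  set m := S.min' hne with hm
  set M := S.max' hne with hM
  have hIcc : S = Finset.Icc m M := by
    apply Finset.ext
    intro t
    constructor
    · intro ht
      exact Finset.mem_Icc.mpr ⟨S.min'_le t ht, S.le_max' t ht⟩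
    · intro ht
      rw [Finset.mem_Icc] at ht
      exact hS m (S.min'_mem hne) M (S.max'_mem hne) t ht.1 ht.2
  have hmM : m ≤ M := le_trans (S.min'_le c hc) (S.le_max' c hc)
  have hmc : m ≤ c := S.min'_le c hc
  have hcM : c ≤ M := S.le_max' c hc
  have hcard : (S.card : ℤ) = M + 1 - m := by
    rw [hIcc, Int.card_Icc]
    omega
  have hfilter : S.filter (fun t => t < c) = Finset.Icc m (c - 1) := by
    rw [hIcc]
    apply Finset.ext
    intro t
    simp only [Finset.mem_filter, Finset.mem_Icc]
    omega
  have hfcard : ((S.filter (fun t => t < c)).card : ℤ) = c - m := by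
    rw [hfilter, Int.card_Icc]
    omega
  conv_lhs => rw [hIcc]
  congr 1 <;> omega

lemma cells_eq_of_sdiff_eq {μ μ' ν : YoungDiagram} (h : μ ≤ ν) (h' : μ' ≤ ν)
    (hd : ν.cells \ μ.cells = ν.cells \ μ'.cells) : μ = μ' := by
  have h1 : μ.cells = μ'.cells := by
    have e1 : ν.cells \ (ν.cells \ μ.cells) = μ.cells := by
      rw [Finset.sdiff_sdiff_self_left, Finset.inter_eq_right]
      exact YoungDiagram.cells_subset_iff.mpr h
    have e2 : ν.cells \ (ν.cells \ μ'.cells) = μ'.cells := by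
      rw [Finset.sdiff_sdiff_self_left, Finset.inter_eq_right]
      exact YoungDiagram.cells_subset_iff.mpr h'
    rw [← e1, ← e2, hd]
  cases μ; cases μ'
  simpa using h1

/-- A ribbon removable from `ν` is determined by its size, a common box, and the
number of its boxes of smaller content. -/
lemma ribbon_determined {ν μ μ' : YoungDiagram} (h : IsRibbon μ ν) (h' : IsRibbon μ' ν)
    (hcard : (ν.cells \ μ.cells).card = (ν.cells \ μ'.cells).card)
    {u : ℕ × ℕ} (hu : u ∈ ν.cells \ μ.cells) (hu' : u ∈ ν.cells \ μ'.cells)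
    (hcnt : ((ν.cells \ μ.cells).filter (fun v => contentZ v < contentZ u)).card
          = ((ν.cells \ μ'.cells).filter (fun v => contentZ v < contentZ u)).card) :
    μ = μ' := by
  classical
  obtain ⟨hle, hne, hconn, h2⟩ := h
  obtain ⟨hle', hne', hconn', h2'⟩ := h'
  set R := ν.cells \ μ.cells with hR
  set R' := ν.cells \ μ'.cells with hR'
  have hinj : Set.InjOn contentZ R := fun x hx y hy hxy =>
    content_inj h2 x hx y hy hxy
  have hinj' : Set.InjOn contentZ R' := fun x hx y hy hxy =>
    content_inj h2' x hx y hy hxy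
  set S := R.image contentZ with hS
  set S' := R'.image contentZ with hS'
  have hSint : ∀ a ∈ S, ∀ b ∈ S, ∀ t : ℤ, a ≤ t → t ≤ b → t ∈ S := by
    intro a ha b hb t h1 h2'
    obtain ⟨x, hx, rfl⟩ := Finset.mem_image.mp ha
    obtain ⟨y, hy, rfl⟩ := Finset.mem_image.mp hb
    obtain ⟨w, hw, hwt⟩ := content_interval hconn x hx y hy t h1 h2'
    exact Finset.mem_image.mpr ⟨w, hw, hwt⟩
  have hS'int : ∀ a ∈ S', ∀ b ∈ S', ∀ t : ℤ, a ≤ t → t ≤ b → t ∈ S' := by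
    intro a ha b hb t h1 h2''
    obtain ⟨x, hx, rfl⟩ := Finset.mem_image.mp ha
    obtain ⟨y, hy, rfl⟩ := Finset.mem_image.mp hb
    obtain ⟨w, hw, hwt⟩ := content_interval hconn' x hx y hy t h1 h2''
    exact Finset.mem_image.mpr ⟨w, hw, hwt⟩
  have hcS : contentZ u ∈ S := Finset.mem_image.mpr ⟨u, hu, rfl⟩
  have hcS' : contentZ u ∈ S' := Finset.mem_image.mpr ⟨u, hu', rfl⟩
  have hcardS : S.card = R.card := Finset.card_image_of_injOn hinj
  have hcardS' : S'.card = R'.card := Finset.card_image_of_injOn hinj'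
  have hfS : S.filter (fun t => t < contentZ u)
      = (R.filter (fun v => contentZ v < contentZ u)).image contentZ := by
    rw [hS, Finset.filter_image]
  have hfS' : S'.filter (fun t => t < contentZ u)
      = (R'.filter (fun v => contentZ v < contentZ u)).image contentZ := by
    rw [hS', Finset.filter_image]
  have hfcard : (S.filter (fun t => t < contentZ u)).card
      = (R.filter (fun v => contentZ v < contentZ u)).card := by
    rw [hfS]
    exact Finset.card_image_of_injOn (hinj.mono (by
      intro x hx
      exact (Finset.mem_filter.mp hx).1))
  have hfcard' : (S'.filter (fun t => t < contentZ u)).card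
      = (R'.filter (fun v => contentZ v < contentZ u)).card := by
    rw [hfS']
    exact Finset.card_image_of_injOn (hinj'.mono (by
      intro x hx
      exact (Finset.mem_filter.mp hx).1))
  have hSeq : S = S' := by
    rw [interval_char hSint hcS, interval_char hS'int hcS', hfcard, hfcard',
      hcardS, hcardS', hcnt, hcard]
  have hReq : R = R' := by
    apply Finset.ext
    intro w
    constructor
    · intro hw
      have : contentZ w ∈ S' := hSeq ▸ Finset.mem_image.mpr ⟨w, hw, rfl⟩
      obtain ⟨w', hw', hww'⟩ := Finset.mem_image.mp this
      rwa [eq_of_content_eq h2 h2' hw hw' hww'.symm]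
    · intro hw
      have : contentZ w ∈ S := hSeq ▸ Finset.mem_image.mpr ⟨w, hw, rfl⟩
      obtain ⟨w', hw', hww'⟩ := Finset.mem_image.mp this
      exact (eq_of_content_eq h2 h2' hw' hw hww') ▸ hw'
  exact cells_eq_of_sdiff_eq hle hle' hReq
open Classical in
/-- Encoding of a ribbon removal step: the diagonal index and side of a chosen corner
of the outer shape inside the ribbon, and the number of ribbon boxes below its content. -/
noncomputable def stepCode (ν μ : YoungDiagram) : ℕ × Bool × ℕ :=
  if h : (ν.cells \ μ.cells).Nonempty then
    let u := Classical.choose (exists_corner h)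
    (min u.1 u.2, decide (u.1 ≤ u.2),
      ((ν.cells \ μ.cells).filter (fun v => contentZ v < contentZ u)).card)
  else (0, true, 0)

lemma stepCode_bound1 {l ν μ : YoungDiagram} (hne : (ν.cells \ μ.cells).Nonempty)
    (hν : ν ≤ l) : (stepCode ν μ).1 < diagLen l := by
  rw [stepCode, dif_pos hne]
  obtain ⟨hu, huν, -, -⟩ := Classical.choose_spec (exists_corner hne)
  exact min_lt_diagLen (hν huν)

lemma stepCode_bound2 {ν μ : YoungDiagram} (hne : (ν.cells \ μ.cells).Nonempty) :
    (stepCode ν μ).2.2 < (ν.cells \ μ.cells).card := by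
  classical
  rw [stepCode, dif_pos hne]
  obtain ⟨hu, -, -, -⟩ := Classical.choose_spec (exists_corner hne)
  set u := Classical.choose (exists_corner hne)
  have hsub : (ν.cells \ μ.cells).filter (fun v => contentZ v < contentZ u)
      ⊆ (ν.cells \ μ.cells).erase u := by
    intro x hx
    rw [Finset.mem_filter] at hx
    rw [Finset.mem_erase]
    refine ⟨fun hxu => ?_, hx.1⟩
    rw [hxu] at hx
    omega
  calc ((ν.cells \ μ.cells).filter (fun v => contentZ v < contentZ u)).card
      ≤ ((ν.cells \ μ.cells).erase u).card := Finset.card_le_card hsub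
    _ < (ν.cells \ μ.cells).card := Finset.card_erase_lt_of_mem hu

lemma step_inj {ν μ μ' : YoungDiagram} (h : IsRibbon μ ν) (h' : IsRibbon μ' ν)
    (hcard : (ν.cells \ μ.cells).card = (ν.cells \ μ'.cells).card)
    (hcode : stepCode ν μ = stepCode ν μ') : μ = μ' := by
  have hne := h.2.1
  have hne' := h'.2.1
  rw [stepCode, dif_pos hne, stepCode, dif_pos hne'] at hcode
  obtain ⟨hu, hucorner⟩ := Classical.choose_spec (exists_corner hne)
  obtain ⟨hu', hucorner'⟩ := Classical.choose_spec (exists_corner hne')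
  set u := Classical.choose (exists_corner hne)
  set u' := Classical.choose (exists_corner hne')
  simp only [Prod.mk.injEq] at hcode
  have huu' : u = u' := corner_inj hucorner hucorner' hcode.1 hcode.2.1
  rw [← huu'] at hu' hcode
  exact ribbon_determined h h' hcard hu hu' hcode.2.2

lemma chain_le {N : ℕ} {l : YoungDiagram} {f : Fin (N + 1) → YoungDiagram}
    (hstep : ∀ i : Fin N, f i.castSucc ≤ f i.succ) (hlast : f (Fin.last N) = l) :
    ∀ j, f j ≤ l := by
  have key : ∀ d : ℕ, ∀ j : Fin (N + 1), (j : ℕ) + d = N → f j ≤ l := by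
    intro d
    induction d with
    | zero =>
      intro j hj
      have : j = Fin.last N := Fin.ext (by simpa using hj)
      rw [this, hlast]
    | succ d ih =>
      intro j hj
      have hjN : (j : ℕ) < N := by omega
      have h1 : f j ≤ f (Fin.succ ⟨j, hjN⟩) := by
        have := hstep ⟨j, hjN⟩
        rwa [show Fin.castSucc ⟨(j : ℕ), hjN⟩ = j from Fin.ext rfl] at this
      exact le_trans h1 (ih (Fin.succ ⟨j, hjN⟩) (by simp [Fin.val_succ]; omega))
  intro j
  exact key (N - j) j (by omega)
lemma two_mul_le_two_pow {a : ℕ} (ha : 1 ≤ a) : 2 * a ≤ 2 ^ a := by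
  induction a with
  | zero => omega
  | succ a ih =>
    rcases Nat.eq_or_lt_of_le ha with h | h
    · simp [← h]
    · have h1 : 1 ≤ a := by omega
      have h2 : 2 ≤ 2 ^ a := by
        calc 2 = 2 * 1 := by ring
        _ ≤ 2 * a := by omega
        _ ≤ 2 ^ a := ih h1
      calc 2 * (a + 1) = 2 * a + 2 := by ring
        _ ≤ 2 ^ a + 2 ^ a := by omega
        _ = 2 ^ (a + 1) := by ring

/-- bound on the number of ribbon tableaux of `λ` of weight `α`, where `α`
lists the cycle lengths of `σ` (fixed points included, in any order). -/
theorem count_ribbon_tableaux (n : ℕ) (l : YoungDiagram) (hl : l.card = n)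
    (σ : Equiv.Perm (Fin n)) (α : List ℕ) (hα : (α : Multiset ℕ) = fullCycleType σ) :
    Nat.card {f : Fin (α.length + 1) → YoungDiagram // IsRibbonTableau l α f} ≤
        ∏ i : Fin α.length, 2 * diagLen l * α.get i ∧
      Nat.card {f : Fin (α.length + 1) → YoungDiagram // IsRibbonTableau l α f} ≤
        2 ^ n * diagLen l ^ cyc σ := by
  classical
  have hchain : ∀ (f : {f : Fin (α.length + 1) → YoungDiagram // IsRibbonTableau l α f})
      (j : Fin (α.length + 1)), f.1 j ≤ l := by
    intro f
    exact chain_le (fun i => (f.2.2.2 i).1.1) f.2.2.1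
  let F : {f : Fin (α.length + 1) → YoungDiagram // IsRibbonTableau l α f} →
      (∀ i : Fin α.length, Fin (diagLen l) × Bool × Fin (α.get i)) := fun f i =>
    (⟨(stepCode (f.1 i.succ) (f.1 i.castSucc)).1,
       stepCode_bound1 ((f.2.2.2 i).1.2.1) (hchain f i.succ)⟩,
     (stepCode (f.1 i.succ) (f.1 i.castSucc)).2.1,
     ⟨(stepCode (f.1 i.succ) (f.1 i.castSucc)).2.2,
       by rw [← (f.2.2.2 i).2]; exact stepCode_bound2 ((f.2.2.2 i).1.2.1)⟩)
  have hFinj : Function.Injective F := by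
    intro f f' hff
    have hcode : ∀ i : Fin α.length,
        stepCode (f.1 i.succ) (f.1 i.castSucc) = stepCode (f'.1 i.succ) (f'.1 i.castSucc) := by
      intro i
      have h1 : F f i = F f' i := congrFun hff i
      have e1 : (stepCode (f.1 i.succ) (f.1 i.castSucc)).1
          = (stepCode (f'.1 i.succ) (f'.1 i.castSucc)).1 := congrArg (fun x => x.1.1) h1
      have e2 : (stepCode (f.1 i.succ) (f.1 i.castSucc)).2.1
          = (stepCode (f'.1 i.succ) (f'.1 i.castSucc)).2.1 := congrArg (fun x => x.2.1) h1
      have e3 : (stepCode (f.1 i.succ) (f.1 i.castSucc)).2.2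
          = (stepCode (f'.1 i.succ) (f'.1 i.castSucc)).2.2 := congrArg (fun x => x.2.2.1) h1
      exact Prod.ext e1 (Prod.ext e2 e3)
    have key : ∀ d : ℕ, ∀ j : Fin (α.length + 1), (j : ℕ) + d = α.length →
        f.1 j = f'.1 j := by
      intro d
      induction d with
      | zero =>
        intro j hj
        have : j = Fin.last _ := Fin.ext (by simpa using hj)
        rw [this, f.2.2.1, f'.2.2.1]
      | succ d ih =>
        intro j hj
        have hjN : (j : ℕ) < α.length := by omega
        set i : Fin α.length := ⟨j, hjN⟩ with hi
        have hcs : i.castSucc = j := Fin.ext rfl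
        have hsucc : f.1 i.succ = f'.1 i.succ :=
          ih i.succ (by simp only [Fin.val_succ, Fin.val_castSucc, Fin.val_mk, hi] at *; omega)
        have h1 := f.2.2.2 i
        have h1' := f'.2.2.2 i
        have hc := hcode i
        rw [hsucc] at h1 hc
        have heq := step_inj h1.1 h1'.1 (by rw [h1.2, h1'.2]) hc
        rw [← hcs]
        exact heq
    apply Subtype.ext
    funext j
    exact key (α.length - j) j (by have := j.isLt; omega)
  have hcardle : Nat.card {f : Fin (α.length + 1) → YoungDiagram // IsRibbonTableau l α f}
      ≤ ∏ i : Fin α.length, 2 * diagLen l * α.get i := by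
    calc Nat.card {f : Fin (α.length + 1) → YoungDiagram // IsRibbonTableau l α f}
        ≤ Nat.card (∀ i : Fin α.length, Fin (diagLen l) × Bool × Fin (α.get i)) :=
          Nat.card_le_card_of_injective F hFinj
      _ = ∏ i : Fin α.length, 2 * diagLen l * α.get i := by
          rw [Nat.card_eq_fintype_card, Fintype.card_pi]
          exact Finset.prod_congr rfl fun i _ => by
            simp only [Fintype.card_prod, Fintype.card_fin, Fintype.card_bool]
            ring
  refine ⟨hcardle, le_trans hcardle ?_⟩
  -- arithmetic part
  have hα1 : ∀ i : Fin α.length, 1 ≤ α.get i := by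
    intro i
    have hmem : α.get i ∈ (↑α : Multiset ℕ) := by
      simpa using List.get_mem α i
    rw [hα] at hmem
    rcases Multiset.mem_add.mp hmem with h | h
    · exact le_trans (by norm_num) (Equiv.Perm.two_le_of_mem_cycleType h)
    · rw [Multiset.eq_of_mem_replicate h]
  have hsum : ∑ i : Fin α.length, α.get i = n := by
    have h1 : ∑ i : Fin α.length, α.get i = α.sum := by
      simpa [List.get_eq_getElem] using Fin.sum_univ_get α
    rw [h1]
    have h2 : (↑α : Multiset ℕ).sum = α.sum := by simp
    rw [← h2, hα, fullCycleType, Multiset.sum_add, Equiv.Perm.sum_cycleType,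
      Multiset.sum_replicate, smul_eq_mul, mul_one]
    have h3 : σ.support.card ≤ n := by
      have := Finset.card_le_univ σ.support
      simpa using this
    omega
  have hlen : α.length = cyc σ := by
    rw [cyc, ← hα, Multiset.coe_card]
  calc (∏ i : Fin α.length, 2 * diagLen l * α.get i)
      = (∏ i : Fin α.length, 2 * α.get i) * diagLen l ^ α.length := by
        rw [← Fin.prod_const α.length (diagLen l), ← Finset.prod_mul_distrib]
        exact Finset.prod_congr rfl fun i _ => by ring
    _ ≤ (∏ i : Fin α.length, 2 ^ α.get i) * diagLen l ^ α.length := by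
        apply Nat.mul_le_mul_right
        exact Finset.prod_le_prod' fun i _ => two_mul_le_two_pow (hα1 i)
    _ = 2 ^ (∑ i : Fin α.length, α.get i) * diagLen l ^ α.length := by
        rw [Finset.prod_pow_eq_pow_sum]
    _ = 2 ^ n * diagLen l ^ cyc σ := by rw [hsum, hlen]

end ThickHookPaper
end

section
/- Let C > 0. For all integers 1 ≤ k ≤ n, every partition λ ⊢ n, and every C-balanced partition μ ⊢ k with μ ⊆ λ, the quantity A_{λ,μ} := k! · d_{λ\μ}/(d_μ · d_λ) satisfies A_{λ,μ} ≤ (C²e)^k. -/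
open scoped BigOperators

namespace ThickHookPaper

def ChainType (μ l : YoungDiagram) : Type :=
  {f : Fin (l.card - μ.card + 1) → YoungDiagram //
    f 0 = μ ∧ f (Fin.last _) = l ∧
    ∀ i : Fin (l.card - μ.card),
      f i.castSucc ≤ f i.succ ∧ (f i.succ).card = (f i.castSucc).card + 1}

lemma chain_le_last' {l : YoungDiagram} {N : ℕ} (f : Fin (N + 1) → YoungDiagram)
    (hlast : f (Fin.last _) = l)
    (hstep : ∀ i : Fin N, f i.castSucc ≤ f i.succ) (j : Fin (N + 1)) : f j ≤ l := by
  suffices H : ∀ t : ℕ, ∀ j : Fin (N + 1), j.val + t = N → f j ≤ l by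
    exact H (N - j.val) j (by have := j.isLt; omega)
  intro t
  induction t with
  | zero =>
    intro j hj
    have : j = Fin.last N := Fin.ext (by simpa using hj)
    rw [this, hlast]
  | succ t ih =>
    intro j hj
    have hlt : j.val < N := by omega
    have h2 := hstep ⟨j.val, hlt⟩
    have h1 : (⟨j.val, hlt⟩ : Fin N).castSucc = j := Fin.ext rfl
    rw [h1] at h2
    exact le_trans h2 (ih (⟨j.val, hlt⟩ : Fin N).succ (by simp [Fin.succ]; omega))

lemma chain_le_last {μ l : YoungDiagram} (f : ChainType μ l) (j : Fin (l.card - μ.card + 1)) :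
    f.1 j ≤ l :=
  chain_le_last' f.1 f.2.2.1 (fun i => (f.2.2.2 i).1) j

instance chainFinite (μ l : YoungDiagram) : Finite (ChainType μ l) := by
  let T := {t : Finset (ℕ × ℕ) // t ⊆ l.cells}
  have : Finite T := by
    have : Finite {x // x ∈ l.cells.powerset} := inferInstance
    exact Finite.of_injective
      (fun t : T => (⟨t.1, Finset.mem_powerset.2 t.2⟩ : {x // x ∈ l.cells.powerset}))
      (by intro a b h; exact Subtype.ext (by simpa using h))
  refine Finite.of_injective (fun f : ChainType μ l =>
    (fun j => (⟨(f.1 j).cells, YoungDiagram.cells_subset_iff.2 (chain_le_last f j)⟩ : T))) ?_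
  intro a b h
  apply Subtype.ext
  funext j
  have := congrFun h j
  exact YoungDiagram.ext (by simpa using this)

lemma skewSYT_eq (μ l : YoungDiagram) : skewSYT μ l = Nat.card (ChainType μ l) := rfl

def concatFun (k n : ℕ) (g : Fin (k + 1) → YoungDiagram) (f : Fin (n - k + 1) → YoungDiagram) :
    Fin (n + 1) → YoungDiagram :=
  fun i => if h : (i : ℕ) ≤ k then g ⟨i, by omega⟩
    else f ⟨(i : ℕ) - k, by have := i.isLt; omega⟩

lemma concat_zero {k n : ℕ} (g : Fin (k + 1) → YoungDiagram) (f : Fin (n - k + 1) → YoungDiagram) :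
    concatFun k n g f 0 = g 0 := by
  have h : (((0 : Fin (n + 1)) : ℕ)) ≤ k := Nat.zero_le _
  simp only [concatFun, dif_pos h]
  exact congrArg g (Fin.ext rfl)

lemma concat_last {μ l : YoungDiagram} (hsub : μ ≤ l)
    (g : Fin (μ.card + 1) → YoungDiagram) (f : Fin (l.card - μ.card + 1) → YoungDiagram)
    (hg : g (Fin.last _) = μ) (hf0 : f 0 = μ) (hf : f (Fin.last _) = l) :
    concatFun μ.card l.card g f (Fin.last _) = l := by
  have hkn : μ.card ≤ l.card := Finset.card_le_card (YoungDiagram.cells_subset_iff.2 hsub)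
  by_cases h : ((Fin.last l.card : Fin (l.card + 1)) : ℕ) ≤ μ.card
  · have hkeq : μ.card = l.card := le_antisymm hkn (by simpa using h)
    have hμl : μ = l := by
      apply YoungDiagram.ext
      exact Finset.eq_of_subset_of_card_le (YoungDiagram.cells_subset_iff.2 hsub) (le_of_eq hkeq.symm)
    simp only [concatFun, dif_pos h]
    have : (⟨((Fin.last l.card : Fin (l.card + 1)) : ℕ), by omega⟩ : Fin (μ.card + 1)) =
        Fin.last μ.card := Fin.ext (by simp [hkeq])
    rw [this, hg, hμl]
  · simp only [concatFun, dif_neg h]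
    have : (⟨((Fin.last l.card : Fin (l.card + 1)) : ℕ) - μ.card, by simp only [Fin.val_last]; omega⟩ :
        Fin (l.card - μ.card + 1)) = Fin.last (l.card - μ.card) := Fin.ext (by simp only [Fin.val_last])
    rw [this, hf]

lemma concat_step {μ l : YoungDiagram} (hsub : μ ≤ l)
    (g : Fin (μ.card + 1) → YoungDiagram) (f : Fin (l.card - μ.card + 1) → YoungDiagram)
    (hglast : g (Fin.last _) = μ)
    (hgstep : ∀ i : Fin μ.card, g i.castSucc ≤ g i.succ ∧ (g i.succ).card = (g i.castSucc).card + 1)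
    (hf0 : f 0 = μ)
    (hfstep : ∀ i : Fin (l.card - μ.card),
      f i.castSucc ≤ f i.succ ∧ (f i.succ).card = (f i.castSucc).card + 1)
    (i : Fin l.card) :
    concatFun μ.card l.card g f i.castSucc ≤ concatFun μ.card l.card g f i.succ ∧
      (concatFun μ.card l.card g f i.succ).card =
        (concatFun μ.card l.card g f i.castSucc).card + 1 := by
  have hilt : (i : ℕ) < l.card := i.isLt
  rcases lt_trichotomy (i : ℕ) μ.card with hik | hik | hik
  · have h1 : ((i.castSucc : Fin (l.card + 1)) : ℕ) ≤ μ.card := le_of_lt hik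
    have h2 : ((i.succ : Fin (l.card + 1)) : ℕ) ≤ μ.card := by
      simp only [Fin.val_succ]; omega
    simp only [concatFun, dif_pos h1, dif_pos h2]
    have e1 : (⟨((i.castSucc : Fin (l.card+1)) : ℕ), by omega⟩ : Fin (μ.card + 1)) =
        (⟨(i : ℕ), hik⟩ : Fin μ.card).castSucc := Fin.ext rfl
    have e2 : (⟨((i.succ : Fin (l.card+1)) : ℕ), by omega⟩ : Fin (μ.card + 1)) =
        (⟨(i : ℕ), hik⟩ : Fin μ.card).succ := Fin.ext rfl
    rw [e1, e2]
    exact hgstep _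
  · have h1 : ((i.castSucc : Fin (l.card + 1)) : ℕ) ≤ μ.card := le_of_eq hik
    have h2 : ¬ ((i.succ : Fin (l.card + 1)) : ℕ) ≤ μ.card := by
      simp only [Fin.val_succ]; omega
    simp only [concatFun, dif_pos h1, dif_neg h2]
    have e1 : (⟨((i.castSucc : Fin (l.card+1)) : ℕ), by omega⟩ : Fin (μ.card + 1)) =
        Fin.last μ.card := Fin.ext (by simpa using hik)
    have hkn : μ.card < l.card := by omega
    have e2 : (⟨((i.succ : Fin (l.card+1)) : ℕ) - μ.card,
        by simp only [Fin.val_succ]; omega⟩ : Fin (l.card - μ.card + 1)) =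
        (⟨0, by omega⟩ : Fin (l.card - μ.card)).succ := Fin.ext (by
          simp only [Fin.val_succ]; omega)
    have e3 : f (⟨0, by omega⟩ : Fin (l.card - μ.card)).castSucc = μ := by
      have h4 : (⟨0, by omega⟩ : Fin (l.card - μ.card)).castSucc = 0 := Fin.ext rfl
      rw [h4, hf0]
    rw [e1, e2, hglast]
    constructor
    · exact le_trans (le_of_eq e3.symm) (hfstep _).1
    · rw [(hfstep _).2, e3]
  · have h1 : ¬ ((i.castSucc : Fin (l.card + 1)) : ℕ) ≤ μ.card := by
      simp only [Fin.coe_castSucc]; omega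
    have h2 : ¬ ((i.succ : Fin (l.card + 1)) : ℕ) ≤ μ.card := by
      simp only [Fin.val_succ]; omega
    simp only [concatFun, dif_neg h1, dif_neg h2]
    have e1 : (⟨((i.castSucc : Fin (l.card+1)) : ℕ) - μ.card,
        by simp only [Fin.coe_castSucc]; omega⟩ : Fin (l.card - μ.card + 1)) =
        (⟨(i : ℕ) - μ.card, by omega⟩ : Fin (l.card - μ.card)).castSucc := Fin.ext rfl
    have e2 : (⟨((i.succ : Fin (l.card+1)) : ℕ) - μ.card,
        by simp only [Fin.val_succ]; omega⟩ : Fin (l.card - μ.card + 1)) =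
        (⟨(i : ℕ) - μ.card, by omega⟩ : Fin (l.card - μ.card)).succ := Fin.ext (by
          simp only [Fin.val_succ, Fin.coe_castSucc]; omega)
    rw [e1, e2]
    exact hfstep _

lemma dim_mul_skew_le (μ l : YoungDiagram) (hsub : μ ≤ l) :
    dim μ * skewSYT μ l ≤ dim l := by
  have hkn : μ.card ≤ l.card := Finset.card_le_card (YoungDiagram.cells_subset_iff.2 hsub)
  rw [dim, dim, skewSYT_eq, skewSYT_eq, skewSYT_eq, ← Nat.card_prod]
  refine Nat.card_le_card_of_injective
    (α := ChainType ⊥ μ × ChainType μ l) (β := ChainType ⊥ l)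
    (fun p =>
      (⟨concatFun μ.card l.card p.1.1 p.2.1,
        (concat_zero p.1.1 p.2.1).trans p.1.2.1,
        concat_last hsub p.1.1 p.2.1 p.1.2.2.1 p.2.2.1 p.2.2.2.1,
        fun i => concat_step hsub p.1.1 p.2.1 p.1.2.2.1
          (fun j => p.1.2.2.2 j) p.2.2.1 (fun j => p.2.2.2.2 j) i⟩ : ChainType ⊥ l)) ?_
  rintro ⟨⟨g, hg0, hglast, hgstep⟩, ⟨f, hf0, hflast, hfstep⟩⟩
    ⟨⟨g', hg0', hglast', hgstep'⟩, ⟨f', hf0', hflast', hfstep'⟩⟩ h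
  have hcat : concatFun μ.card l.card g f = concatFun μ.card l.card g' f' := by
    exact congrArg Subtype.val h
  have hgeq : g = g' := by
    funext j
    have hj : (j : ℕ) < μ.card + 1 := j.isLt
    have := congrFun hcat ⟨(j : ℕ), by omega⟩
    have hle : ((⟨(j : ℕ), by omega⟩ : Fin (l.card + 1)) : ℕ) ≤ μ.card := by simpa using Nat.lt_succ_iff.mp hj
    simp only [concatFun, dif_pos hle] at this
    have e : (⟨((⟨(j : ℕ), by omega⟩ : Fin (l.card + 1)) : ℕ), by omega⟩ : Fin (μ.card + 1)) = j :=
      Fin.ext rfl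
    rwa [e] at this
  have hfeq : f = f' := by
    funext j
    rcases Nat.eq_zero_or_pos (j : ℕ) with hj0 | hj0
    · have : j = 0 := Fin.ext (by simpa using hj0)
      rw [this, hf0, hf0']
    · have hj : (j : ℕ) < l.card - μ.card + 1 := j.isLt
      have := congrFun hcat ⟨μ.card + (j : ℕ), by omega⟩
      have hle : ¬ ((⟨μ.card + (j : ℕ), by omega⟩ : Fin (l.card + 1)) : ℕ) ≤ μ.card := by simp only []; omega
      simp only [concatFun, dif_neg hle] at this
      have e : (⟨((⟨μ.card + (j : ℕ), by omega⟩ : Fin (l.card + 1)) : ℕ) - μ.card, by simp only []; omega⟩ :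
          Fin (l.card - μ.card + 1)) = j := Fin.ext (by simp only []; omega)
      rwa [e] at this
  subst hgeq hfeq
  rfl

section LemmaB

variable {μ : YoungDiagram}

/-- diagonal index of a cell -/
def dg (u : ℕ × ℕ) : ℕ := u.1 + u.2

/-- the sorting key: lexicographic in (diagonal, position in `b`) -/
def bkey (b : Fin μ.card ≃ {u // u ∈ μ.cells}) (u : {u // u ∈ μ.cells}) : ℕ :=
  dg u.1 * μ.card + (b.symm u : ℕ)

lemma bkey_inj (b : Fin μ.card ≃ {u // u ∈ μ.cells}) :
    Function.Injective (bkey b) := by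
  intro u v h
  have hu : (b.symm u : ℕ) < μ.card := (b.symm u).isLt
  have hv : (b.symm v : ℕ) < μ.card := (b.symm v).isLt
  have hd : dg u.1 = dg v.1 := by
    unfold bkey at h
    rcases lt_trichotomy (dg u.1) (dg v.1) with h' | h' | h'
    · exfalso
      have h2 := Nat.mul_le_mul_right μ.card (Nat.succ_le_of_lt h')
      rw [Nat.succ_mul] at h2
      omega
    · exact h'
    · exfalso
      have h2 := Nat.mul_le_mul_right μ.card (Nat.succ_le_of_lt h')
      rw [Nat.succ_mul] at h2
      omega
  have hr : (b.symm u : ℕ) = (b.symm v : ℕ) := by unfold bkey at h; rw [hd] at h; omega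
  have : b.symm u = b.symm v := Fin.ext hr
  exact b.symm.injective this

lemma bkey_lt_of_dg_lt (b : Fin μ.card ≃ {u // u ∈ μ.cells}) {u v : {u // u ∈ μ.cells}}
    (h : dg u.1 < dg v.1) : bkey b u < bkey b v := by
  have hu : (b.symm u : ℕ) < μ.card := (b.symm u).isLt
  unfold bkey
  have h2 := Nat.mul_le_mul_right μ.card (Nat.succ_le_of_lt h)
  rw [Nat.succ_mul] at h2
  omega

lemma bkey_lt_iff_same_dg (b : Fin μ.card ≃ {u // u ∈ μ.cells}) {u v : {u // u ∈ μ.cells}}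
    (h : dg u.1 = dg v.1) : (bkey b u < bkey b v ↔ (b.symm u : ℕ) < (b.symm v : ℕ)) := by
  unfold bkey; rw [h]; omega

/-- the rank of a cell in the key order -/
def brk (b : Fin μ.card ≃ {u // u ∈ μ.cells}) (u : {u // u ∈ μ.cells}) : ℕ :=
  (Finset.univ.filter (fun v => bkey b v < bkey b u)).card

lemma brk_lt_of_bkey_lt (b : Fin μ.card ≃ {u // u ∈ μ.cells}) {u v : {u // u ∈ μ.cells}}
    (h : bkey b u < bkey b v) : brk b u < brk b v := by
  apply Finset.card_lt_card
  have hsub : Finset.univ.filter (fun w => bkey b w < bkey b u) ⊆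
      Finset.univ.filter (fun w => bkey b w < bkey b v) := by
    intro w hw
    simp only [Finset.mem_filter] at hw ⊢
    exact ⟨hw.1, lt_trans hw.2 h⟩
  have hmem : u ∈ Finset.univ.filter (fun w => bkey b w < bkey b v) := by
    simp only [Finset.mem_filter]
    exact ⟨Finset.mem_univ _, h⟩
  have hnot : u ∉ Finset.univ.filter (fun w => bkey b w < bkey b u) := by
    simp only [Finset.mem_filter]
    intro hc
    omega
  exact (Finset.ssubset_iff_of_subset hsub).2 ⟨u, hmem, hnot⟩

lemma brk_lt_iff (b : Fin μ.card ≃ {u // u ∈ μ.cells}) (u v : {u // u ∈ μ.cells}) :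
    brk b u < brk b v ↔ bkey b u < bkey b v := by
  constructor
  · intro h
    rcases lt_trichotomy (bkey b u) (bkey b v) with h1 | h1 | h1
    · exact h1
    · exfalso; rw [bkey_inj b h1] at h; omega
    · exfalso; have := brk_lt_of_bkey_lt b h1; omega
  · exact brk_lt_of_bkey_lt b

lemma brk_inj (b : Fin μ.card ≃ {u // u ∈ μ.cells}) :
    Function.Injective (brk b) := by
  intro u v h
  rcases lt_trichotomy (bkey b u) (bkey b v) with h1 | h1 | h1
  · exfalso; have := brk_lt_of_bkey_lt b h1; omega
  · exact bkey_inj b h1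
  · exfalso; have := brk_lt_of_bkey_lt b h1; omega

lemma brk_lt_card (b : Fin μ.card ≃ {u // u ∈ μ.cells}) (u : {u // u ∈ μ.cells}) :
    brk b u < μ.card := by
  have h1 : Finset.univ.filter (fun v => bkey b v < bkey b u) ⊆ Finset.univ.erase u := by
    intro w hw
    simp only [Finset.mem_filter] at hw
    apply Finset.mem_erase.2
    refine ⟨?_, Finset.mem_univ _⟩
    intro he; rw [he] at hw; omega
  calc brk b u ≤ (Finset.univ.erase u).card := Finset.card_le_card h1
    _ < Finset.univ.card := Finset.card_erase_lt_of_mem (Finset.mem_univ u)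
    _ = μ.card := by rw [Finset.card_univ, Fintype.card_coe]


lemma card_brk_lt (b : Fin μ.card ≃ {u // u ∈ μ.cells}) {t : ℕ} (ht : t ≤ μ.card) :
    (Finset.univ.filter (fun u => brk b u < t)).card = t := by
  classical
  have hinj : Function.Injective (fun u => (⟨brk b u, brk_lt_card b u⟩ : Fin μ.card)) := by
    intro u v h
    exact brk_inj b (by simpa using congrArg Fin.val h)
  have hbij : Function.Bijective (fun u => (⟨brk b u, brk_lt_card b u⟩ : Fin μ.card)) := by
    rw [Fintype.bijective_iff_injective_and_card]
    exact ⟨hinj, by simp [Fintype.card_coe]⟩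
  have e1 : {u // brk b u < t} ≃ {j : Fin μ.card // (j : ℕ) < t} :=
    (Equiv.ofBijective _ hbij).subtypeEquiv (fun u => Iff.rfl)
  have e2 : {j : Fin μ.card // (j : ℕ) < t} ≃ Fin t :=
    { toFun := fun j => ⟨j.1, j.2⟩
      invFun := fun i => ⟨⟨i, lt_of_lt_of_le i.2 ht⟩, i.2⟩
      left_inv := fun j => Subtype.ext (Fin.ext rfl)
      right_inv := fun i => Fin.ext rfl }
  calc (Finset.univ.filter (fun u => brk b u < t)).card
      = Fintype.card {u // brk b u < t} := (Fintype.card_subtype _).symm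
    _ = Fintype.card (Fin t) := Fintype.card_congr (e1.trans e2)
    _ = t := Fintype.card_fin t

def cellsF (b : Fin μ.card ≃ {u // u ∈ μ.cells}) (t : ℕ) : Finset (ℕ × ℕ) :=
  (Finset.univ.filter (fun v : {u // u ∈ μ.cells} => brk b v < t)).image Subtype.val

lemma mem_cellsF {b : Fin μ.card ≃ {u // u ∈ μ.cells}} {t : ℕ} {u : ℕ × ℕ} :
    u ∈ cellsF b t ↔ ∃ h : u ∈ μ.cells, brk b ⟨u, h⟩ < t := by
  constructor
  · intro h
    rcases Finset.mem_image.1 h with ⟨v, hv, rfl⟩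
    exact ⟨v.2, (Finset.mem_filter.1 hv).2⟩
  · rintro ⟨h, hb⟩
    exact Finset.mem_image.2 ⟨⟨u, h⟩, Finset.mem_filter.2 ⟨Finset.mem_univ _, hb⟩, rfl⟩

lemma card_cellsF (b : Fin μ.card ≃ {u // u ∈ μ.cells}) {t : ℕ} (ht : t ≤ μ.card) :
    (cellsF b t).card = t := by
  rw [cellsF, Finset.card_image_of_injective _ Subtype.val_injective, card_brk_lt b ht]

lemma lower_cellsF (b : Fin μ.card ≃ {u // u ∈ μ.cells}) (t : ℕ) :
    IsLowerSet (cellsF b t : Set (ℕ × ℕ)) := by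
  intro x y hyx hx
  rw [Finset.mem_coe, mem_cellsF] at hx
  rw [Finset.mem_coe, mem_cellsF]
  rcases hx with ⟨hxμ, hxr⟩
  have hyμ : y ∈ μ.cells := Finset.mem_coe.1 (μ.isLowerSet hyx (Finset.mem_coe.2 hxμ))
  refine ⟨hyμ, ?_⟩
  by_cases hxy : y = x
  · subst hxy
    exact hxr
  · have h1 := (Prod.le_def.1 hyx).1
    have h2 := (Prod.le_def.1 hyx).2
    have hne : y.1 ≠ x.1 ∨ y.2 ≠ x.2 := by
      by_contra hc
      push_neg at hc
      exact hxy (Prod.ext hc.1 hc.2)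
    have hd : dg y < dg x := by
      unfold dg
      rcases hne with hne | hne <;> omega
    have hkey : bkey b ⟨y, hyμ⟩ < bkey b ⟨x, hxμ⟩ := bkey_lt_of_dg_lt b hd
    exact lt_trans (brk_lt_of_bkey_lt b hkey) hxr

def chainYD (b : Fin μ.card ≃ {u // u ∈ μ.cells}) (t : ℕ) : YoungDiagram :=
  ⟨cellsF b t, lower_cellsF b t⟩

lemma chainYD_zero (b : Fin μ.card ≃ {u // u ∈ μ.cells}) : chainYD b 0 = ⊥ := by
  apply YoungDiagram.ext
  rw [YoungDiagram.cells_bot]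
  apply Finset.eq_empty_of_forall_notMem
  intro u hu
  rcases mem_cellsF.1 hu with ⟨h, hb⟩
  omega

lemma chainYD_full (b : Fin μ.card ≃ {u // u ∈ μ.cells}) : chainYD b μ.card = μ := by
  apply YoungDiagram.ext
  show cellsF b μ.card = μ.cells
  apply Finset.Subset.antisymm
  · intro u hu
    exact (mem_cellsF.1 hu).1
  · intro u hu
    exact mem_cellsF.2 ⟨hu, brk_lt_card b _⟩

lemma chainYD_mono (b : Fin μ.card ≃ {u // u ∈ μ.cells}) {s t : ℕ} (h : s ≤ t) :
    chainYD b s ≤ chainYD b t := by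
  rw [← YoungDiagram.cells_subset_iff]
  intro u hu
  rcases mem_cellsF.1 hu with ⟨hm, hb⟩
  exact mem_cellsF.2 ⟨hm, lt_of_lt_of_le hb h⟩

lemma chainYD_card (b : Fin μ.card ≃ {u // u ∈ μ.cells}) {t : ℕ} (ht : t ≤ μ.card) :
    (chainYD b t).card = t := card_cellsF b ht

def chainB (b : Fin μ.card ≃ {u // u ∈ μ.cells}) : ChainType ⊥ μ :=
  ⟨fun t : Fin (μ.card + 1) => chainYD b t.val,
   chainYD_zero b,
   chainYD_full b,
   fun i => by
     have hi : (i : ℕ) < μ.card := i.isLt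
     refine ⟨chainYD_mono b (by exact Nat.le_succ _), ?_⟩
     show (chainYD b ((i : ℕ) + 1)).card = (chainYD b (i : ℕ)).card + 1
     rw [chainYD_card b (by omega), chainYD_card b (by omega)]⟩

lemma dg_lt_maxHook {u : ℕ × ℕ} (hu : u ∈ μ.cells) : dg u < maxHook μ := by
  obtain ⟨i, j⟩ := u
  have hm : (i, j) ∈ μ := (YoungDiagram.mem_cells _).1 hu
  have h1 : j < μ.rowLen i := YoungDiagram.mem_iff_lt_rowLen.1 hm
  have h2 : i < μ.colLen j := YoungDiagram.mem_iff_lt_colLen.1 hm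
  have h3 : μ.rowLen i ≤ μ.rowLen 0 := μ.rowLen_anti 0 i (Nat.zero_le _)
  have h4 : μ.colLen j ≤ μ.colLen 0 := μ.colLen_anti 0 j (Nat.zero_le _)
  unfold maxHook dg
  simp only
  omega


lemma seq_inj {k : ℕ} (A : Fin k → ℕ) {t1 t2 : Fin k} (hA : A t1 = A t2)
    (hcnt : (Finset.univ.filter (fun t' : Fin k => (t' : ℕ) < (t1 : ℕ) ∧ A t' = A t1)).card =
            (Finset.univ.filter (fun t' : Fin k => (t' : ℕ) < (t2 : ℕ) ∧ A t' = A t2)).card) :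
    t1 = t2 := by
  classical
  have key : ∀ s1 s2 : Fin k, (s1 : ℕ) < (s2 : ℕ) → A s1 = A s2 →
      (Finset.univ.filter (fun t' : Fin k => (t' : ℕ) < (s1 : ℕ) ∧ A t' = A s1)).card <
      (Finset.univ.filter (fun t' : Fin k => (t' : ℕ) < (s2 : ℕ) ∧ A t' = A s2)).card := by
    intro s1 s2 hlt hAeq
    apply Finset.card_lt_card
    constructor
    · intro w hw
      simp only [Finset.mem_filter] at hw ⊢
      exact ⟨hw.1, by omega, by rw [← hAeq]; exact hw.2.2⟩
    · intro hsub
      have hmem : s1 ∈ Finset.univ.filter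
          (fun t' : Fin k => (t' : ℕ) < (s2 : ℕ) ∧ A t' = A s2) := by
        simp only [Finset.mem_filter]
        exact ⟨Finset.mem_univ _, hlt, hAeq⟩
      have := hsub hmem
      simp only [Finset.mem_filter] at this
      omega
  rcases lt_trichotomy (t1 : ℕ) (t2 : ℕ) with h | h | h
  · exact absurd hcnt (by have := key t1 t2 h hA; omega)
  · exact Fin.ext h
  · exact absurd hcnt (by have := key t2 t1 h hA.symm; omega)

lemma cnt_eq (b : Fin μ.card ≃ {u // u ∈ μ.cells}) (u : {u // u ∈ μ.cells}) :
    (Finset.univ.filter (fun t' : Fin μ.card =>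
        (t' : ℕ) < (b.symm u : ℕ) ∧ dg (b t').1 = dg u.1)).card =
    (Finset.univ.filter (fun v : {u // u ∈ μ.cells} =>
        dg v.1 = dg u.1 ∧ brk b v < brk b u)).card := by
  classical
  apply Finset.card_bij (fun t _ => b t)
  · intro t ht
    simp only [Finset.mem_filter] at ht ⊢
    refine ⟨Finset.mem_univ _, ht.2.2, ?_⟩
    rw [brk_lt_iff, bkey_lt_iff_same_dg b ht.2.2, Equiv.symm_apply_apply]
    exact ht.2.1
  · intro t1 h1 t2 h2 h
    exact b.injective h
  · intro v hv
    simp only [Finset.mem_filter] at hv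
    refine ⟨b.symm v, ?_, by rw [Equiv.apply_symm_apply]⟩
    simp only [Finset.mem_filter]
    refine ⟨Finset.mem_univ _, ?_, by rw [Equiv.apply_symm_apply]; exact hv.2.1⟩
    have := hv.2.2
    rw [brk_lt_iff, bkey_lt_iff_same_dg b hv.2.1] at this
    exact this

lemma chainB_inj (b c : Fin μ.card ≃ {u // u ∈ μ.cells})
    (h1 : chainB b = chainB c) (h2 : ∀ t, dg (b t).1 = dg (c t).1) : b = c := by
  classical
  have hchain : ∀ t : ℕ, t < μ.card + 1 → cellsF b t = cellsF c t := by
    intro t ht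
    have := congrFun (congrArg Subtype.val h1) ⟨t, ht⟩
    exact congrArg YoungDiagram.cells this
  have hρ : ∀ u : {u // u ∈ μ.cells}, brk b u = brk c u := by
    intro u
    have hub : brk b u < μ.card := brk_lt_card b u
    have huc : brk c u < μ.card := brk_lt_card c u
    have m1 : u.1 ∈ cellsF b (brk b u + 1) := mem_cellsF.2 ⟨u.2, Nat.lt_succ_self _⟩
    rw [hchain _ (by omega)] at m1
    rcases mem_cellsF.1 m1 with ⟨hm, hb1⟩
    have hb1' : brk c u < brk b u + 1 := hb1
    have m2 : u.1 ∈ cellsF c (brk c u + 1) := mem_cellsF.2 ⟨u.2, Nat.lt_succ_self _⟩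
    rw [← hchain _ (by omega)] at m2
    rcases mem_cellsF.1 m2 with ⟨hm2, hb2⟩
    have hb2' : brk b u < brk c u + 1 := hb2
    omega
  have hsymm : ∀ u, b.symm u = c.symm u := by
    intro u
    apply seq_inj (fun t => dg (b t).1)
    · show dg (b (b.symm u)).1 = dg (b (c.symm u)).1
      rw [Equiv.apply_symm_apply, h2 (c.symm u), Equiv.apply_symm_apply]
    · have f1 : (Finset.univ.filter (fun t' : Fin μ.card =>
          (t' : ℕ) < (b.symm u : ℕ) ∧ dg (b t').1 = dg (b (b.symm u)).1)) =
          (Finset.univ.filter (fun t' : Fin μ.card =>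
          (t' : ℕ) < (b.symm u : ℕ) ∧ dg (b t').1 = dg u.1)) :=
        Finset.filter_congr (fun t' _ => by rw [Equiv.apply_symm_apply])
      have f2 : (Finset.univ.filter (fun t' : Fin μ.card =>
          (t' : ℕ) < (c.symm u : ℕ) ∧ dg (b t').1 = dg (b (c.symm u)).1)) =
          (Finset.univ.filter (fun t' : Fin μ.card =>
          (t' : ℕ) < (c.symm u : ℕ) ∧ dg (c t').1 = dg u.1)) :=
        Finset.filter_congr (fun t' _ => by rw [h2 t', h2 (c.symm u), Equiv.apply_symm_apply])
      have f3 : (Finset.univ.filter (fun v : {u // u ∈ μ.cells} =>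
          dg v.1 = dg u.1 ∧ brk b v < brk b u)) =
          (Finset.univ.filter (fun v : {u // u ∈ μ.cells} =>
          dg v.1 = dg u.1 ∧ brk c v < brk c u)) :=
        Finset.filter_congr (fun v _ => by rw [hρ v, hρ u])
      rw [f1, f2, cnt_eq b u, cnt_eq c u, f3]
  have : b.symm = c.symm := Equiv.ext hsymm
  rw [← Equiv.symm_symm b, this, Equiv.symm_symm]

lemma factorial_le_pow_mul_dim (μ : YoungDiagram) :
    (μ.card).factorial ≤ maxHook μ ^ μ.card * dim μ := by
  classical
  have hcoe : Fintype.card {u // u ∈ μ.cells} = μ.card := Fintype.card_coe _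
  have e0 : Fin μ.card ≃ {u // u ∈ μ.cells} := Fintype.equivOfCardEq (by simp [hcoe])
  have hfac : (μ.card).factorial = Nat.card (Fin μ.card ≃ {u // u ∈ μ.cells}) := by
    rw [Nat.card_eq_fintype_card, Fintype.card_equiv e0, Fintype.card_fin]
  have htarget : Nat.card (ChainType ⊥ μ × (Fin μ.card → Fin (maxHook μ))) =
      dim μ * maxHook μ ^ μ.card := by
    rw [Nat.card_prod, Nat.card_eq_fintype_card (α := Fin μ.card → Fin (maxHook μ))]
    rw [dim, skewSYT_eq]
    congr 1
    simp [Fintype.card_fun]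
  have hle := Nat.card_le_card_of_injective
    (α := Fin μ.card ≃ {u // u ∈ μ.cells})
    (β := ChainType ⊥ μ × (Fin μ.card → Fin (maxHook μ)))
    (fun b => (chainB b, fun t => ⟨dg (b t).1, dg_lt_maxHook (b t).2⟩))
    (by
      intro b c h
      have h1 : chainB b = chainB c := congrArg Prod.fst h
      have h2 : ∀ t, dg (b t).1 = dg (c t).1 := by
        intro t
        have := congrFun (congrArg Prod.snd h) t
        exact congrArg Fin.val this
      exact chainB_inj b c h1 h2)
  rw [← hfac, htarget] at hle
  exact le_trans hle (le_of_eq (Nat.mul_comm _ _))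

end LemmaB

lemma succ_pow_le_exp_mul (k : ℕ) : ((k : ℝ) + 1) ^ k ≤ Real.exp 1 * (k : ℝ) ^ k := by
  rcases Nat.eq_zero_or_pos k with h | h
  · subst h
    have := Real.add_one_le_exp (1 : ℝ)
    simp only [Nat.cast_zero, zero_add, one_pow, pow_zero, mul_one]
    linarith
  · have hk0 : (k : ℝ) ≠ 0 := by positivity
    have h1 : ((k : ℝ) + 1) / k ≤ Real.exp (1 / k) := by
      have he := Real.add_one_le_exp (1 / (k : ℝ))
      have heq : ((k : ℝ) + 1) / k = 1 / k + 1 := by field_simp; ring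
      rw [heq]
      exact he
    have h2 : (((k : ℝ) + 1) / k) ^ k ≤ Real.exp (1 / k) ^ k :=
      pow_le_pow_left₀ (by positivity) h1 k
    have h3 : Real.exp (1 / (k : ℝ)) ^ k = Real.exp 1 := by
      rw [← Real.exp_nat_mul]
      congr 1
      field_simp
    have h4 : ((k : ℝ) + 1) ^ k = (((k : ℝ) + 1) / k) ^ k * (k : ℝ) ^ k := by
      rw [div_pow]
      field_simp
    rw [h4, ← h3]
    exact mul_le_mul_of_nonneg_right h2 (by positivity)

lemma pow_le_exp_pow_mul_factorial (k : ℕ) :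
    (k : ℝ) ^ k ≤ Real.exp 1 ^ k * (k.factorial : ℝ) := by
  induction k with
  | zero => simp
  | succ k ih =>
    have h1 := succ_pow_le_exp_mul k
    calc ((k + 1 : ℕ) : ℝ) ^ (k + 1) = ((k : ℝ) + 1) * ((k : ℝ) + 1) ^ k := by push_cast; ring
      _ ≤ ((k : ℝ) + 1) * (Real.exp 1 * (k : ℝ) ^ k) :=
          mul_le_mul_of_nonneg_left h1 (by positivity)
      _ ≤ ((k : ℝ) + 1) * (Real.exp 1 * (Real.exp 1 ^ k * (k.factorial : ℝ))) := by
          apply mul_le_mul_of_nonneg_left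
            (mul_le_mul_of_nonneg_left ih (le_of_lt (Real.exp_pos 1))) (by positivity)
      _ = Real.exp 1 ^ (k + 1) * (((k : ℝ) + 1) * (k.factorial : ℝ)) := by ring
      _ = Real.exp 1 ^ (k + 1) * (((k + 1).factorial : ℝ)) := by
          rw [Nat.factorial_succ]; push_cast; ring

lemma main_proof (C : ℝ) (hC : 0 < C) (n k : ℕ) (hk : 1 ≤ k) (hkn : k ≤ n)
    (l μ : YoungDiagram) (hl : l.card = n) (hμ : μ.card = k) (hsub : μ ≤ l)
    (hbal : (maxHook μ : ℝ) ≤ C * Real.sqrt (k : ℝ)) :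
    (k.factorial : ℝ) * (skewSYT μ l : ℝ) / ((dim μ : ℝ) * (dim l : ℝ)) ≤
      (C ^ 2 * Real.exp 1) ^ k := by
  subst hl hμ
  by_cases hS : skewSYT μ l = 0
  · rw [hS]
    push_cast
    rw [mul_zero, zero_div]
    positivity
  have hA := dim_mul_skew_le μ l hsub
  have hB := factorial_le_pow_mul_dim μ
  have hfacpos := Nat.factorial_pos μ.card
  have hdμ : 0 < dim μ := by
    rcases Nat.eq_zero_or_pos (dim μ) with h | h
    · rw [h, Nat.mul_zero] at hB; omega
    · exact h
  have hSpos : 0 < skewSYT μ l := Nat.pos_of_ne_zero hS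
  have hdl : 0 < dim l := lt_of_lt_of_le (Nat.mul_pos hdμ hSpos) hA
  have hdμR : (0 : ℝ) < (dim μ : ℝ) := by exact_mod_cast hdμ
  have hdlR : (0 : ℝ) < (dim l : ℝ) := by exact_mod_cast hdl
  have hSR : (0 : ℝ) < (skewSYT μ l : ℝ) := by exact_mod_cast hSpos
  have hFR : (0 : ℝ) < (μ.card.factorial : ℝ) := by exact_mod_cast hfacpos
  have hAR : (dim μ : ℝ) * (skewSYT μ l : ℝ) ≤ (dim l : ℝ) := by exact_mod_cast hA
  have hBR : (μ.card.factorial : ℝ) ≤ (maxHook μ : ℝ) ^ μ.card * (dim μ : ℝ) := by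
    exact_mod_cast hB
  have hsq : (maxHook μ : ℝ) ^ 2 ≤ C ^ 2 * (μ.card : ℝ) := by
    have h1 : (0 : ℝ) ≤ (maxHook μ : ℝ) := Nat.cast_nonneg _
    have h2 := mul_self_le_mul_self h1 hbal
    calc (maxHook μ : ℝ) ^ 2 = (maxHook μ : ℝ) * (maxHook μ : ℝ) := sq (maxHook μ : ℝ)
      _ ≤ (C * Real.sqrt (μ.card : ℝ)) * (C * Real.sqrt (μ.card : ℝ)) := h2
      _ = C ^ 2 * (Real.sqrt (μ.card : ℝ) * Real.sqrt (μ.card : ℝ)) := by ring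
      _ = C ^ 2 * (μ.card : ℝ) := by rw [Real.mul_self_sqrt (Nat.cast_nonneg _)]
  have hKK := pow_le_exp_pow_mul_factorial μ.card
  have hkey : (μ.card.factorial : ℝ) ≤
      (C ^ 2 * Real.exp 1) ^ μ.card * ((dim μ : ℝ) * (dim μ : ℝ)) := by
    have h1 : (μ.card.factorial : ℝ) * (μ.card.factorial : ℝ) ≤
        ((maxHook μ : ℝ) ^ 2) ^ μ.card * ((dim μ : ℝ) * (dim μ : ℝ)) := by
      calc (μ.card.factorial : ℝ) * (μ.card.factorial : ℝ)
          ≤ ((maxHook μ : ℝ) ^ μ.card * (dim μ : ℝ)) *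
            ((maxHook μ : ℝ) ^ μ.card * (dim μ : ℝ)) :=
            mul_le_mul hBR hBR (le_of_lt hFR) (by positivity)
        _ = ((maxHook μ : ℝ) ^ 2) ^ μ.card * ((dim μ : ℝ) * (dim μ : ℝ)) := by ring
    have h2 : ((maxHook μ : ℝ) ^ 2) ^ μ.card ≤ (C ^ 2 * (μ.card : ℝ)) ^ μ.card :=
      pow_le_pow_left₀ (by positivity) hsq _
    have h4 : (C ^ 2) ^ μ.card * (μ.card : ℝ) ^ μ.card ≤
        (C ^ 2) ^ μ.card * (Real.exp 1 ^ μ.card * (μ.card.factorial : ℝ)) :=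
      mul_le_mul_of_nonneg_left hKK (by positivity)
    have h5 : (μ.card.factorial : ℝ) * (μ.card.factorial : ℝ) ≤
        ((C ^ 2 * Real.exp 1) ^ μ.card * ((dim μ : ℝ) * (dim μ : ℝ))) *
          (μ.card.factorial : ℝ) := by
      calc (μ.card.factorial : ℝ) * (μ.card.factorial : ℝ)
          ≤ ((maxHook μ : ℝ) ^ 2) ^ μ.card * ((dim μ : ℝ) * (dim μ : ℝ)) := h1
        _ ≤ (C ^ 2 * (μ.card : ℝ)) ^ μ.card * ((dim μ : ℝ) * (dim μ : ℝ)) :=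
            mul_le_mul_of_nonneg_right h2 (by positivity)
        _ = ((C ^ 2) ^ μ.card * (μ.card : ℝ) ^ μ.card) * ((dim μ : ℝ) * (dim μ : ℝ)) := by
            rw [mul_pow]
        _ ≤ ((C ^ 2) ^ μ.card * (Real.exp 1 ^ μ.card * (μ.card.factorial : ℝ))) *
            ((dim μ : ℝ) * (dim μ : ℝ)) := mul_le_mul_of_nonneg_right h4 (by positivity)
        _ = ((C ^ 2 * Real.exp 1) ^ μ.card * ((dim μ : ℝ) * (dim μ : ℝ))) *
            (μ.card.factorial : ℝ) := by rw [mul_pow]; ring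
    exact le_of_mul_le_mul_right h5 hFR
  have hstep1 : (μ.card.factorial : ℝ) * (skewSYT μ l : ℝ) / ((dim μ : ℝ) * (dim l : ℝ)) ≤
      (μ.card.factorial : ℝ) / ((dim μ : ℝ) * (dim μ : ℝ)) := by
    rw [div_le_div_iff₀ (by positivity) (by positivity)]
    nlinarith [mul_le_mul_of_nonneg_left hAR (mul_nonneg hFR.le hdμR.le)]
  have hstep2 : (μ.card.factorial : ℝ) / ((dim μ : ℝ) * (dim μ : ℝ)) ≤
      (C ^ 2 * Real.exp 1) ^ μ.card := by
    rw [div_le_iff₀ (by positivity)]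
    linarith [hkey]
  exact le_trans hstep1 hstep2


/-- bound on the random compression ratio `A_{λ,μ} = k!·d_{λ\μ}/(d_μ·d_λ)`
for `C`-balanced `μ`. -/
theorem A_ratio_bound (C : ℝ) (hC : 0 < C) (n k : ℕ) (hk : 1 ≤ k) (hkn : k ≤ n)
    (l μ : YoungDiagram) (hl : l.card = n) (hμ : μ.card = k) (hsub : μ ≤ l)
    (hbal : (maxHook μ : ℝ) ≤ C * Real.sqrt (k : ℝ)) :
    (k.factorial : ℝ) * (skewSYT μ l : ℝ) / ((dim μ : ℝ) * (dim l : ℝ)) ≤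
      (C ^ 2 * Real.exp 1) ^ k := by
  exact main_proof C hC n k hk hkn l μ hl hμ hsub hbal

end ThickHookPaper
end
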